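/- Let f : ℝⁿ → ℝ be Lipschitz and let u solve u_t + F(Du,D²u) = f with u(·,0) = 0, where F does not depend on x and the comparison principle holds. Then for each t > 0 and all x₁, x₂ ∈ ℝⁿ, |u(x₁,t) − u(x₂,t)| ≤ ‖Df‖_∞ · t · |x₁ − x₂|. -/
import Mathlib


/-- Proposition 3.4 (abstract form): for `u_t + F(Du,D²u) = f` with Lipschitz `f`,
`u(·,0) = 0`, an `x`-independent operator (translation invariance) and the comparison
principle, `|u(x₁,t) − u(x₂,t)| ≤ ‖Df‖_∞ · t · |x₁ − x₂|`. -/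
theorem stmt_15 {n : ℕ} (f : EuclideanSpace ℝ (Fin n) → ℝ) (L : ℝ) (hL : 0 ≤ L)
    (hf : LipschitzWith (Real.toNNReal L) f)
    (SubSol SuperSol : (EuclideanSpace ℝ (Fin n) → ℝ) →
      (EuclideanSpace ℝ (Fin n) → ℝ → ℝ) → Prop)
    (u : EuclideanSpace ℝ (Fin n) → ℝ → ℝ)
    (husub : SubSol f u) (husup : SuperSol f u) (hinit : ∀ x, u x 0 = 0)
    (hcomp : ∀ g v w, SubSol g v → SuperSol g w → (∀ x, v x 0 ≤ w x 0) →
      ∀ x t, 0 ≤ t → v x t ≤ w x t)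
    (htranslate : ∀ y, SubSol (fun x => f (x + y)) (fun x t => u (x + y) t) ∧
      SuperSol (fun x => f (x + y)) (fun x t => u (x + y) t))
    (hlinSub : ∀ g v (c : ℝ),
      SubSol g v → SubSol (fun x => g x + c) (fun x t => v x t + c * t))
    (hlinSup : ∀ g v (c : ℝ),
      SuperSol g v → SuperSol (fun x => g x + c) (fun x t => v x t + c * t))
    (hmonoSub : ∀ (g h : EuclideanSpace ℝ (Fin n) → ℝ) v,
      SubSol g v → (∀ x, g x ≤ h x) → SubSol h v)
    (hmonoSup : ∀ (g h : EuclideanSpace ℝ (Fin n) → ℝ) v,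
      SuperSol g v → (∀ x, h x ≤ g x) → SuperSol h v) :
    ∀ t, 0 ≤ t → ∀ x₁ x₂, |u x₁ t - u x₂ t| ≤ L * t * ‖x₁ - x₂‖ := by
  -- Key one-sided estimate: u (x + y) t - L‖y‖ t ≤ u x t
  have key : ∀ (y : EuclideanSpace ℝ (Fin n)) (x : EuclideanSpace ℝ (Fin n)) (t : ℝ),
      0 ≤ t → u (x + y) t + (-(L * ‖y‖)) * t ≤ u x t := by
    intro y x t ht
    have hsub := (htranslate y).1
    have hsub2 := hlinSub _ _ (-(L * ‖y‖)) hsub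
    have hle : ∀ x, f (x + y) + (-(L * ‖y‖)) ≤ f x := by
      intro x
      have := hf.dist_le_mul (x + y) x
      rw [Real.dist_eq] at this
      have hnorm : dist (x + y) x = ‖y‖ := by
        rw [dist_eq_norm]; simp
      rw [hnorm] at this
      have habs := abs_le.mp this
      have hcoe : (Real.toNNReal L : ℝ) = L := Real.coe_toNNReal L hL
      rw [hcoe] at habs
      linarith [habs.1]
    have hsub3 := hmonoSub _ f _ hsub2 hle
    have hcmp := hcomp f _ u hsub3 husup (by intro x; simp [hinit]) x t ht
    simpa using hcmp
  intro t ht x₁ x₂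
  rw [abs_sub_le_iff]
  constructor
  · have h := key (x₁ - x₂) x₂ t ht
    simp only [add_sub_cancel] at h
    nlinarith
  · have h := key (x₂ - x₁) x₁ t ht
    simp only [add_sub_cancel] at h
    rw [norm_sub_rev]
    nlinarith
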